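/- arXiv:2111.11314 — 5 statements merged into one kernel-verified Lean document; each statement's English description precedes it below -/
import Mathlib

section
/- For every 0 ≤ t ≤ T and every k ∈ Fin K, the forward value satisfies α t k = Σ over all prefix paths z : Fin (t+1) → Fin K with z t = k of π (z 0) · ∏_{s=1}^{t} φ s (z (s−1)) (z s) · e s (z s). -/
open Finset Real

/-- the forward value `α t k` equals the sum over all prefix paths
ending in state `k` at position `t` of the product of initial, transition and
emission weights. -/
theorem stmt_2 (K T : ℕ) (hK : 1 ≤ K) (hT : 1 ≤ T)
    (pi0 : Fin K → ℝ) (φ : ℕ → Fin K → Fin K → ℝ) (e : ℕ → Fin K → ℝ)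
    (hπ : ∀ k, 0 ≤ pi0 k)
    (hφ : ∀ t k' k, 0 ≤ φ t k' k)
    (he : ∀ t k, 0 ≤ e t k)
    (α : ℕ → Fin K → ℝ)
    (hα0 : ∀ k, α 0 k = pi0 k)
    (hαrec : ∀ t, 1 ≤ t → t ≤ T → ∀ k : Fin K,
      α t k = e t k * ∑ k' : Fin K, φ t k' k * α (t - 1) k') :
    ∀ t, t ≤ T → ∀ k : Fin K,
      α t k = ∑ z ∈ Finset.univ.filter
          (fun z : Fin (t + 1) → Fin K => z (Fin.last t) = k),
        pi0 (z 0) *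
          ∏ s : Fin t, φ (↑s + 1) (z s.castSucc) (z s.succ) * e (↑s + 1) (z s.succ) := by
  intro t
  induction t with
  | zero =>
    intro _ k
    rw [hα0]
    rw [Finset.sum_filter]
    rw [← Equiv.sum_comp (Equiv.funUnique (Fin 1) (Fin K)).symm]
    simp [Fin.last, Equiv.funUnique]
  | succ t ih =>
    intro hle k
    rw [hαrec (t + 1) (Nat.succ_le_succ (Nat.zero_le t)) hle k]
    simp only [Nat.add_sub_cancel]
    have hset : (Finset.univ.filter (fun z : Fin (t + 1 + 1) → Fin K => z (Fin.last (t + 1)) = k))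
        = Finset.image (fun z' : Fin (t + 1) → Fin K => Fin.snoc z' k) Finset.univ := by
      ext z
      simp only [Finset.mem_filter, Finset.mem_image, Finset.mem_univ, true_and]
      constructor
      · intro h
        exact ⟨Fin.init z, by rw [← h]; exact (Fin.snoc_init_self z)⟩
      · rintro ⟨z', rfl⟩
        simp [Fin.snoc_last]
    rw [hset, Finset.sum_image (by
      intro a _ b _ hab
      have := congrArg Fin.init hab
      simpa [Fin.init_snoc] using this)]
    rw [← Finset.sum_fiberwise_of_maps_to (g := fun z' : Fin (t + 1) → Fin K => z' (Fin.last t))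
      (fun x _ => Finset.mem_univ _)]
    rw [Finset.mul_sum]
    refine Finset.sum_congr rfl ?_
    intro k' _
    rw [ih (Nat.le_of_succ_le hle) k', Finset.mul_sum, Finset.mul_sum]
    refine Finset.sum_congr rfl ?_
    intro z' hz'
    have hlast : z' (Fin.last t) = k' := (Finset.mem_filter.mp hz').2
    rw [Fin.prod_univ_castSucc]
    have h0 : (Fin.snoc z' k : Fin (t+1+1) → Fin K) 0 = z' 0 := by
      have : (0 : Fin (t+1+1)) = Fin.castSucc 0 := rfl
      rw [this, Fin.snoc_castSucc]
    have hterm : ∀ i : Fin t,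
        (Fin.snoc z' k : Fin (t+1+1) → Fin K) (Fin.castSucc i.castSucc) = z' i.castSucc ∧
        (Fin.snoc z' k : Fin (t+1+1) → Fin K) (Fin.castSucc i).succ = z' i.succ := by
      intro i
      constructor
      · rw [Fin.snoc_castSucc]
      · rw [Fin.succ_castSucc, Fin.snoc_castSucc]
    have hlastterm :
        (Fin.snoc z' k : Fin (t+1+1) → Fin K) (Fin.castSucc (Fin.last t)) = k' ∧
        (Fin.snoc z' k : Fin (t+1+1) → Fin K) (Fin.last t).succ = k := by
      constructor
      · rw [Fin.snoc_castSucc, hlast]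
      · rw [Fin.succ_last, Fin.snoc_last]
    simp only [Fin.coe_castSucc]
    rw [h0, (hlastterm).1, (hlastterm).2]
    have hprod : ∀ i : Fin t,
        φ (↑i + 1) ((Fin.snoc z' k : Fin (t+1+1) → Fin K) i.castSucc.castSucc)
            ((Fin.snoc z' k : Fin (t+1+1) → Fin K) i.castSucc.succ) *
          e (↑i + 1) ((Fin.snoc z' k : Fin (t+1+1) → Fin K) i.castSucc.succ)
        = φ (↑i + 1) (z' i.castSucc) (z' i.succ) * e (↑i + 1) (z' i.succ) := by
      intro i
      rw [(hterm i).1, (hterm i).2]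
    rw [Finset.prod_congr rfl (fun i _ => hprod i)]
    simp [Fin.val_last]
    ring
end

section
/- For every 0 ≤ t ≤ T and every k ∈ Fin K, the backward value satisfies β t k = Σ over all suffix state sequences (z_t, z_{t+1}, …, z_T) ∈ (Fin K)^{T−t+1} with z_t = k of ∏_{s=t+1}^{T} φ s (z_{s−1}) (z_s) · e s (z_s), where the empty product (case t = T) equals 1. -/
open Finset Real

lemma filter_sum_cons {K n : ℕ} (k : Fin K) (F : (Fin (n+1) → Fin K) → ℝ) :
    ∑ z ∈ Finset.univ.filter (fun z : Fin (n+1) → Fin K => z 0 = k), F z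
      = ∑ y : Fin n → Fin K, F (Fin.cons k y) := by
  have key : ∀ z ∈ Finset.univ.filter (fun z : Fin (n+1) → Fin K => z 0 = k),
      Fin.cons k (Fin.tail z) = z := by
    intro z hz
    simp only [Finset.mem_filter] at hz
    funext i
    induction i using Fin.cases with
    | zero => simpa using hz.2.symm
    | succ i => rfl
  refine Finset.sum_bij' (fun z _ => Fin.tail z) (fun y _ => Fin.cons k y)
    (fun z hz => Finset.mem_univ _) (fun y hy => ?_) (fun z hz => key z hz)
    (fun y hy => ?_) (fun z hz => (congrArg F (key z hz)).symm)
  · simp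
  · simp [Fin.tail_cons]

lemma sum_pi_succ {K n : ℕ} (G : (Fin (n+1) → Fin K) → ℝ) :
    ∑ y : Fin (n+1) → Fin K, G y
      = ∑ k' : Fin K, ∑ y' : Fin n → Fin K, G (Fin.cons k' y') := by
  rw [← (Fin.consEquiv (fun _ => Fin K)).sum_comp G, Fintype.sum_prod_type]
  rfl

lemma aux_backward {K T : ℕ} (φ : ℕ → Fin K → Fin K → ℝ) (e : ℕ → Fin K → ℝ)
    (β : ℕ → Fin K → ℝ)
    (hβT : ∀ k, β T k = 1)
    (hβrec : ∀ t, t < T → ∀ k : Fin K,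
      β t k = ∑ k' : Fin K, φ (t + 1) k k' * e (t + 1) k' * β (t + 1) k') :
    ∀ n t, t + n = T → ∀ k : Fin K,
      β t k = ∑ z ∈ Finset.univ.filter (fun z : Fin (n + 1) → Fin K => z 0 = k),
        ∏ s : Fin n,
          φ (t + ↑s + 1) (z s.castSucc) (z s.succ) * e (t + ↑s + 1) (z s.succ) := by
  intro n
  induction n with
  | zero =>
    intro t ht k
    have : t = T := by omega
    subst this
    rw [filter_sum_cons k, hβT]
    simp
  | succ n ih =>
    intro t ht k
    have hlt : t < T := by omega
    rw [hβrec t hlt, filter_sum_cons k, sum_pi_succ]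
    refine Finset.sum_congr rfl fun k' _ => ?_
    rw [ih (t+1) (by omega) k', filter_sum_cons k', Finset.mul_sum]
    refine Finset.sum_congr rfl fun y' _ => ?_
    rw [Fin.prod_univ_succ]
    congr 1
    refine Finset.prod_congr rfl fun s _ => ?_
    have h1 : t + ↑(Fin.succ s) + 1 = t + 1 + ↑s + 1 := by
      simp [Fin.val_succ]; omega
    have h2 : (Fin.cons k (Fin.cons k' y') : Fin (n+2) → Fin K) s.succ.castSucc
        = (Fin.cons k' y' : Fin (n+1) → Fin K) s.castSucc := by
      rw [← Fin.succ_castSucc, Fin.cons_succ]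
    have h3 : (Fin.cons k (Fin.cons k' y') : Fin (n+2) → Fin K) s.succ.succ
        = (Fin.cons k' y' : Fin (n+1) → Fin K) s.succ := by
      rw [Fin.cons_succ]
    rw [h1, h2, h3]

/-- the backward value `β t k` equals the sum over all suffix state
sequences `(z_t, …, z_T)` starting in state `k` at position `t` of the product of
transition and emission weights (the empty product, for `t = T`, equals 1). -/
theorem stmt_3 (K T : ℕ) (hK : 1 ≤ K) (hT : 1 ≤ T)
    (pi0 : Fin K → ℝ) (φ : ℕ → Fin K → Fin K → ℝ) (e : ℕ → Fin K → ℝ)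
    (hπ : ∀ k, 0 ≤ pi0 k)
    (hφ : ∀ t k' k, 0 ≤ φ t k' k)
    (he : ∀ t k, 0 ≤ e t k)
    (β : ℕ → Fin K → ℝ)
    (hβT : ∀ k, β T k = 1)
    (hβrec : ∀ t, t < T → ∀ k : Fin K,
      β t k = ∑ k' : Fin K, φ (t + 1) k k' * e (t + 1) k' * β (t + 1) k') :
    ∀ t, t ≤ T → ∀ k : Fin K,
      β t k = ∑ z ∈ Finset.univ.filter
          (fun z : Fin (T - t + 1) → Fin K => z 0 = k),
        ∏ s : Fin (T - t),
          φ (t + ↑s + 1) (z s.castSucc) (z s.succ) * e (t + ↑s + 1) (z s.succ) := by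
  intro t ht k
  exact aux_backward φ e β hβT hβrec (T - t) t (by omega) k
end

section
/- For every 0 ≤ t ≤ T and every k ∈ Fin K, α t k · β t k = Σ over all paths z : Fin (T+1) → Fin K with z t = k of W(z). -/
open Finset Real

noncomputable def pw {K : ℕ} (pi0 : Fin K → ℝ) (φ : ℕ → Fin K → Fin K → ℝ)
    (e : ℕ → Fin K → ℝ) (t : ℕ) (x : Fin (t + 1) → Fin K) : ℝ :=
  pi0 (x 0) * ∏ s : Fin t, φ ((s : ℕ) + 1) (x s.castSucc) (x s.succ) * e ((s : ℕ) + 1) (x s.succ)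

lemma pw_snoc {K t : ℕ} (pi0 : Fin K → ℝ) (φ : ℕ → Fin K → Fin K → ℝ)
    (e : ℕ → Fin K → ℝ) (x : Fin (t + 1) → Fin K) (a : Fin K) :
    pw pi0 φ e (t + 1) (Fin.snoc x a) =
      pw pi0 φ e t x * (φ (t + 1) (x (Fin.last t)) a * e (t + 1) a) := by
  unfold pw
  rw [Fin.prod_univ_castSucc]
  have h0 : (Fin.snoc x a : Fin (t + 2) → Fin K) 0 = x 0 := by
    rw [show (0 : Fin (t + 2)) = Fin.castSucc 0 by simp, Fin.snoc_castSucc]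
  rw [h0]
  have hterm : ∀ s : Fin t,
      φ ((s.castSucc : ℕ) + 1) ((Fin.snoc x a : Fin (t+2) → Fin K) s.castSucc.castSucc)
          ((Fin.snoc x a : Fin (t+2) → Fin K) s.castSucc.succ) *
        e ((s.castSucc : ℕ) + 1) ((Fin.snoc x a : Fin (t+2) → Fin K) s.castSucc.succ) =
      φ ((s : ℕ) + 1) (x s.castSucc) (x s.succ) * e ((s : ℕ) + 1) (x s.succ) := by
    intro s
    rw [Fin.succ_castSucc, Fin.snoc_castSucc, Fin.snoc_castSucc]
    simp
  rw [Finset.prod_congr rfl fun s _ => hterm s]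
  have hlast : ∀ i : Fin (t + 2), i = (Fin.last t).castSucc →
      (Fin.snoc x a : Fin (t+2) → Fin K) i = x (Fin.last t) := by
    intro i hi; rw [hi, Fin.snoc_castSucc]
  rw [hlast _ rfl, show ((Fin.last t).succ : Fin (t+2)) = Fin.last (t+1) by
    ext; simp, Fin.snoc_last]
  simp [Fin.val_last]
  ring

lemma fwd {K T : ℕ} (pi0 : Fin K → ℝ) (φ : ℕ → Fin K → Fin K → ℝ) (e : ℕ → Fin K → ℝ)
    (α : ℕ → Fin K → ℝ)
    (hα0 : ∀ k, α 0 k = pi0 k)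
    (hαrec : ∀ t, 1 ≤ t → t ≤ T → ∀ k : Fin K,
      α t k = e t k * ∑ k' : Fin K, φ t k' k * α (t - 1) k') :
    ∀ t, t ≤ T → ∀ k : Fin K,
      α t k = ∑ x : Fin (t + 1) → Fin K,
        if x (Fin.last t) = k then pw pi0 φ e t x else 0 := by
  intro t
  induction t with
  | zero =>
    intro _ k
    rw [hα0]
    rw [← (Equiv.funUnique (Fin 1) (Fin K)).symm.sum_comp]
    simp [pw, Equiv.funUnique]
  | succ t ih =>
    intro ht k
    rw [hαrec (t + 1) (by omega) ht k]
    simp only [Nat.add_sub_cancel]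
    rw [← (Fin.snocEquiv (fun _ => Fin K)).sum_comp, Fintype.sum_prod_type]
    have hsnoc : ∀ (a : Fin K) (x : Fin (t+1) → Fin K),
        (Fin.snocEquiv (fun _ => Fin K)) (a, x) = Fin.snoc x a :=
      fun a x => funext fun i => rfl
    simp only [hsnoc, Fin.snoc_last, pw_snoc]
    conv_rhs => rw [Finset.sum_comm]
    simp only [ih (by omega), Finset.mul_sum, Finset.sum_mul, mul_ite, ite_mul,
      mul_zero, zero_mul]
    rw [Finset.sum_comm]
    refine Finset.sum_congr rfl fun x _ => ?_
    rw [Finset.sum_ite_eq, Finset.sum_ite_eq']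
    simp only [Finset.mem_univ, if_true]
    ring

noncomputable def bw {K : ℕ} (φ : ℕ → Fin K → Fin K → ℝ) (e : ℕ → Fin K → ℝ)
    (t m : ℕ) (k : Fin K) (y : Fin m → Fin K) : ℝ :=
  ∏ s : Fin m, φ (t + (s : ℕ) + 1) ((Fin.cons k y : Fin (m+1) → Fin K) s.castSucc)
      ((Fin.cons k y : Fin (m+1) → Fin K) s.succ) *
    e (t + (s : ℕ) + 1) ((Fin.cons k y : Fin (m+1) → Fin K) s.succ)

lemma bw_cons {K t m : ℕ} (φ : ℕ → Fin K → Fin K → ℝ) (e : ℕ → Fin K → ℝ)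
    (k a : Fin K) (y : Fin m → Fin K) :
    bw φ e t (m + 1) k (Fin.cons a y) =
      φ (t + 1) k a * e (t + 1) a * bw φ e (t + 1) m a y := by
  unfold bw
  rw [Fin.prod_univ_succ]
  have h0 : (Fin.cons k (Fin.cons a y) : Fin (m+2) → Fin K) (Fin.castSucc 0) = k := by
    simp
  have h1 : (Fin.cons k (Fin.cons a y) : Fin (m+2) → Fin K) (Fin.succ 0) = a := by
    simp
  rw [h0, h1]
  have hterm : ∀ s : Fin m,
      φ (t + ((s.succ : Fin (m+1)) : ℕ) + 1)
          ((Fin.cons k (Fin.cons a y) : Fin (m+2) → Fin K) s.succ.castSucc)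
          ((Fin.cons k (Fin.cons a y) : Fin (m+2) → Fin K) s.succ.succ) *
        e (t + ((s.succ : Fin (m+1)) : ℕ) + 1)
          ((Fin.cons k (Fin.cons a y) : Fin (m+2) → Fin K) s.succ.succ) =
      φ (t + 1 + (s : ℕ) + 1) ((Fin.cons a y : Fin (m+1) → Fin K) s.castSucc)
          ((Fin.cons a y : Fin (m+1) → Fin K) s.succ) *
        e (t + 1 + (s : ℕ) + 1) ((Fin.cons a y : Fin (m+1) → Fin K) s.succ) := by
    intro s
    rw [← Fin.succ_castSucc, Fin.cons_succ, Fin.cons_succ]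
    have : t + ((s.succ : Fin (m+1)) : ℕ) + 1 = t + 1 + (s : ℕ) + 1 := by
      simp [Fin.val_succ]; omega
    rw [this]
  rw [Finset.prod_congr rfl fun s _ => hterm s]
  simp

lemma bwd {K T : ℕ} (φ : ℕ → Fin K → Fin K → ℝ) (e : ℕ → Fin K → ℝ)
    (β : ℕ → Fin K → ℝ)
    (hβT : ∀ k, β T k = 1)
    (hβrec : ∀ t, t < T → ∀ k : Fin K,
      β t k = ∑ k' : Fin K, φ (t + 1) k k' * e (t + 1) k' * β (t + 1) k') :
    ∀ m t, t + m = T → ∀ k : Fin K,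
      β t k = ∑ y : Fin m → Fin K, bw φ e t m k y := by
  intro m
  induction m with
  | zero =>
    intro t htm k
    obtain rfl : t = T := by omega
    rw [hβT]
    simp [bw]
  | succ m ih =>
    intro t htm k
    rw [hβrec t (by omega) k]
    rw [← (Fin.consEquiv (fun _ => Fin K)).sum_comp, Fintype.sum_prod_type]
    have hcons : ∀ (a : Fin K) (y : Fin m → Fin K),
        (Fin.consEquiv (fun _ => Fin K)) (a, y) = Fin.cons a y :=
      fun a y => funext fun i => rfl
    simp only [hcons, bw_cons]
    refine Finset.sum_congr rfl fun a _ => ?_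
    rw [ih (t + 1) (by omega) a, Finset.mul_sum]
lemma combine {K T : ℕ} (pi0 : Fin K → ℝ) (φ : ℕ → Fin K → Fin K → ℝ) (e : ℕ → Fin K → ℝ)
    (t m : ℕ) (hm : t + m = T) (k : Fin K) :
    (∑ x : Fin (t + 1) → Fin K, if x (Fin.last t) = k then pw pi0 φ e t x else 0) *
      (∑ y : Fin m → Fin K, bw φ e t m k y) =
    ∑ z : Fin (T + 1) → Fin K,
      if z ⟨t, by omega⟩ = k then
        pi0 (z 0) *
          ∏ s : Fin T, φ ((s : ℕ) + 1) (z s.castSucc) (z s.succ) *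
            e ((s : ℕ) + 1) (z s.succ)
      else 0 := by
  have h1 : (t + 1) + m = T + 1 := by omega
  set E : ((Fin (t+1) → Fin K) × (Fin m → Fin K)) ≃ (Fin (T+1) → Fin K) :=
    (Fin.appendEquiv (t+1) m).trans (Equiv.arrowCongr (finCongr h1) (Equiv.refl (Fin K)))
    with hE
  rw [← E.sum_comp, Fintype.sum_prod_type, Finset.sum_mul_sum]
  refine Finset.sum_congr rfl fun x _ => Finset.sum_congr rfl fun y _ => ?_
  have hEapp : ∀ i : Fin (T+1), E (x, y) i = Fin.append x y (Fin.cast h1.symm i) :=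
    fun i => rfl
  have zl : ∀ (i : Fin (T+1)) (hi : (i : ℕ) < t + 1), E (x, y) i = x ⟨i, hi⟩ := by
    intro i hi
    rw [hEapp, show Fin.cast h1.symm i = Fin.castAdd m ⟨(i : ℕ), hi⟩ from Fin.ext (by simp),
      Fin.append_left]
  have zr : ∀ (i : Fin (T+1)) (hi : t + 1 ≤ (i : ℕ)),
      E (x, y) i = y ⟨(i : ℕ) - (t + 1), by have := i.isLt; omega⟩ := by
    intro i hi
    rw [hEapp, show Fin.cast h1.symm i =
        Fin.natAdd (t+1) ⟨(i : ℕ) - (t + 1), by have := i.isLt; omega⟩ from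
      Fin.ext (by simp; omega), Fin.append_right]
  have hcond : E (x, y) ⟨t, by omega⟩ = x (Fin.last t) := zl _ (by simp)
  rw [hcond]
  split_ifs with hk
  · -- main weight computation
    have h0 : E (x, y) 0 = x 0 := zl 0 (by simp)
    have hsplit :
        (∏ s : Fin T, φ ((s : ℕ) + 1) (E (x,y) s.castSucc) (E (x,y) s.succ) *
          e ((s : ℕ) + 1) (E (x,y) s.succ)) =
        (∏ s : Fin t, φ ((s : ℕ) + 1) (x s.castSucc) (x s.succ) *
          e ((s : ℕ) + 1) (x s.succ)) * bw φ e t m k y := by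
      rw [← (finCongr hm).prod_comp]
      rw [Fin.prod_univ_add (f := fun s : Fin (t + m) =>
        φ (((finCongr hm s : Fin T) : ℕ) + 1) (E (x,y) (finCongr hm s).castSucc)
            (E (x,y) (finCongr hm s).succ) *
          e (((finCongr hm s : Fin T) : ℕ) + 1) (E (x,y) (finCongr hm s).succ))]
      congr 1
      · refine Finset.prod_congr rfl fun s _ => ?_
        have hs := s.isLt
        have hv : ((finCongr hm (Fin.castAdd m s) : Fin T) : ℕ) = (s : ℕ) := by simp
        have hcs : E (x,y) (finCongr hm (Fin.castAdd m s)).castSucc = x s.castSucc := by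
          rw [zl _ (by simp only [finCongr_apply, Fin.coe_castSucc, Fin.coe_cast, Fin.coe_castAdd]; omega)]
          exact congrArg x (Fin.ext (by simp))
        have hsu : E (x,y) (finCongr hm (Fin.castAdd m s)).succ = x s.succ := by
          rw [zl _ (by simp only [finCongr_apply, Fin.val_succ, Fin.coe_cast, Fin.coe_castAdd]; omega)]
          exact congrArg x (Fin.ext (by simp))
        rw [hv, hcs, hsu]
      · unfold bw
        refine Finset.prod_congr rfl fun s _ => ?_
        have hs := s.isLt
        have hv : ((finCongr hm (Fin.natAdd t s) : Fin T) : ℕ) = t + (s : ℕ) := by simp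
        have hsu : E (x,y) (finCongr hm (Fin.natAdd t s)).succ =
            (Fin.cons k y : Fin (m+1) → Fin K) s.succ := by
          rw [zr _ (by simp only [finCongr_apply, Fin.val_succ, Fin.coe_cast, Fin.coe_natAdd]; omega),
            Fin.cons_succ]
          congr 1
          exact Fin.ext (by simp only [finCongr_apply, Fin.val_succ, Fin.coe_cast, Fin.coe_natAdd]; omega)
        have hcs : E (x,y) (finCongr hm (Fin.natAdd t s)).castSucc =
            (Fin.cons k y : Fin (m+1) → Fin K) s.castSucc := by
          obtain ⟨sv, hsv⟩ := s
          cases sv with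
          | zero =>
            rw [zl _ (by simp)]
            rw [show (Fin.castSucc ⟨0, hsv⟩ : Fin (m+1)) = 0 from rfl, Fin.cons_zero]
            exact hk
          | succ j =>
            have hj : j < m := by omega
            rw [zr _ (by simp only [finCongr_apply, Fin.coe_castSucc, Fin.coe_cast, Fin.coe_natAdd]; omega)]
            rw [show (Fin.castSucc ⟨j + 1, hsv⟩ : Fin (m+1)) = Fin.succ ⟨j, hj⟩ from rfl,
              Fin.cons_succ]
            congr 1
            exact Fin.ext (by simp only [finCongr_apply, Fin.coe_castSucc, Fin.coe_cast, Fin.coe_natAdd]; omega)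
        rw [hv, hcs, hsu]
    rw [h0, hsplit, pw]
    ring
  · rw [zero_mul]

/-- `α t k · β t k` equals the total weight of all paths passing
through state `k` at position `t`. -/
theorem stmt_4 (K T : ℕ) (hK : 1 ≤ K) (hT : 1 ≤ T)
    (pi0 : Fin K → ℝ) (φ : ℕ → Fin K → Fin K → ℝ) (e : ℕ → Fin K → ℝ)
    (hπ : ∀ k, 0 ≤ pi0 k)
    (hφ : ∀ t k' k, 0 ≤ φ t k' k)
    (he : ∀ t k, 0 ≤ e t k)
    (α : ℕ → Fin K → ℝ)
    (hα0 : ∀ k, α 0 k = pi0 k)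
    (hαrec : ∀ t, 1 ≤ t → t ≤ T → ∀ k : Fin K,
      α t k = e t k * ∑ k' : Fin K, φ t k' k * α (t - 1) k')
    (β : ℕ → Fin K → ℝ)
    (hβT : ∀ k, β T k = 1)
    (hβrec : ∀ t, t < T → ∀ k : Fin K,
      β t k = ∑ k' : Fin K, φ (t + 1) k k' * e (t + 1) k' * β (t + 1) k') :
    ∀ t, ∀ ht : t ≤ T, ∀ k : Fin K,
      α t k * β t k = ∑ z ∈ Finset.univ.filter
          (fun z : Fin (T + 1) → Fin K => z ⟨t, Nat.lt_succ_of_le ht⟩ = k),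
        pi0 (z 0) *
          ∏ s : Fin T, φ (↑s + 1) (z s.castSucc) (z s.succ) * e (↑s + 1) (z s.succ) := by
  intro t ht k
  have hm : t + (T - t) = T := by omega
  rw [fwd pi0 φ e α hα0 hαrec t ht k, bwd φ e β hβT hβrec (T - t) t hm k,
    combine pi0 φ e t (T - t) hm k, Finset.sum_filter]
end

section
/- The total likelihood equals the sum of the final forward values: Σ_{k ∈ Fin K} α T k = Σ over all paths z : Fin (T+1) → Fin K of W(z). -/
open Finset Real

/-- the total likelihood equals the sum of the final forward
values: `Σ_k α T k = Σ_z W(z)`. -/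
theorem stmt_5 (K T : ℕ) (hK : 1 ≤ K) (hT : 1 ≤ T)
    (pi0 : Fin K → ℝ) (φ : ℕ → Fin K → Fin K → ℝ) (e : ℕ → Fin K → ℝ)
    (hπ : ∀ k, 0 ≤ pi0 k)
    (hφ : ∀ t k' k, 0 ≤ φ t k' k)
    (he : ∀ t k, 0 ≤ e t k)
    (α : ℕ → Fin K → ℝ)
    (hα0 : ∀ k, α 0 k = pi0 k)
    (hαrec : ∀ t, 1 ≤ t → t ≤ T → ∀ k : Fin K,
      α t k = e t k * ∑ k' : Fin K, φ t k' k * α (t - 1) k') :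
    ∑ k : Fin K, α T k
      = ∑ z : Fin (T + 1) → Fin K,
          pi0 (z 0) *
            ∏ s : Fin T, φ (↑s + 1) (z s.castSucc) (z s.succ) * e (↑s + 1) (z s.succ) := by
  set F : ∀ t : ℕ, (Fin (t + 1) → Fin K) → ℝ := fun t z =>
    pi0 (z 0) * ∏ s : Fin t, φ (↑s + 1) (z s.castSucc) (z s.succ) * e (↑s + 1) (z s.succ)
    with hF
  have key : ∀ t, t ≤ T → ∀ k : Fin K,
      α t k = ∑ z : Fin (t + 1) → Fin K, if z (Fin.last t) = k then F t z else 0 := by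
    intro t
    induction t with
    | zero =>
      intro _ k
      rw [hα0]
      symm
      rw [Fintype.sum_equiv (Equiv.funUnique (Fin 1) (Fin K)) _
        (fun k' : Fin K => if k' = k then pi0 k' else 0)
        (by intro z; simp [hF, Equiv.funUnique, Fin.last])]
      simp
    | succ t ih =>
      intro ht k
      rw [hαrec (t + 1) (Nat.le_add_left 1 t) ht]
      simp only [Nat.add_sub_cancel]
      have ihh := ih (Nat.le_of_succ_le ht)
      have hsnoc : ∀ (z : Fin (t + 1) → Fin K) (k'' : Fin K),
          F (t + 1) (Fin.snoc z k'') = F t z * (φ (t + 1) (z (Fin.last t)) k'' *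
            e (t + 1) k'') := by
        intro z k''
        simp only [hF]
        have h0 : (Fin.snoc z k'' : Fin (t + 2) → Fin K) 0 = z 0 := by
          have : (0 : Fin (t + 2)) = Fin.castSucc 0 := rfl
          rw [this, Fin.snoc_castSucc]
        rw [h0, Fin.prod_univ_castSucc]
        have hprod : (∏ s : Fin t,
            φ (↑s.castSucc + 1) ((Fin.snoc z k'' : Fin (t+2) → Fin K) s.castSucc.castSucc)
              ((Fin.snoc z k'' : Fin (t+2) → Fin K) s.castSucc.succ) *
            e (↑s.castSucc + 1) ((Fin.snoc z k'' : Fin (t+2) → Fin K) s.castSucc.succ))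
            = ∏ s : Fin t, φ (↑s + 1) (z s.castSucc) (z s.succ) * e (↑s + 1) (z s.succ) := by
          apply Finset.prod_congr rfl
          intro s _
          rw [Fin.succ_castSucc, Fin.snoc_castSucc, Fin.snoc_castSucc, Fin.coe_castSucc]
        rw [hprod]
        have hl1 : (Fin.snoc z k'' : Fin (t+2) → Fin K) (Fin.last t).castSucc
            = z (Fin.last t) := Fin.snoc_castSucc ..
        have hl2 : (Fin.snoc z k'' : Fin (t+2) → Fin K) (Fin.last t).succ = k'' := by
          rw [Fin.succ_last, Fin.snoc_last]
        rw [hl1, hl2, Fin.val_last]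
        ring
      calc e (t + 1) k * ∑ k' : Fin K, φ (t + 1) k' k * α t k'
          = ∑ z : Fin (t + 1) → Fin K,
              F t z * (φ (t + 1) (z (Fin.last t)) k * e (t + 1) k) := by
            simp_rw [ihh, Finset.mul_sum, mul_ite, mul_zero]
            rw [Finset.sum_comm]
            apply Finset.sum_congr rfl
            intro z _
            rw [Finset.sum_ite_eq Finset.univ (z (Fin.last t))
              (fun k' => e (t+1) k * (φ (t+1) k' k * F t z))]
            simp only [Finset.mem_univ, if_true]
            ring
        _ = ∑ p : Fin K × (Fin (t + 1) → Fin K),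
              if (Fin.snocEquiv (fun _ => Fin K) p) (Fin.last (t + 1)) = k then
                F (t + 1) (Fin.snocEquiv (fun _ => Fin K) p) else 0 := by
            rw [Fintype.sum_prod_type_right]
            apply Finset.sum_congr rfl
            intro z _
            have hh : ∀ k'' : Fin K,
                (Fin.snocEquiv (fun _ => Fin K) (k'', z)) = Fin.snoc z k'' := fun _ => rfl
            simp_rw [hh, Fin.snoc_last, hsnoc]
            rw [Finset.sum_ite_eq' Finset.univ k
              (fun k'' => F t z * (φ (t + 1) (z (Fin.last t)) k'' * e (t + 1) k''))]
            simp
        _ = ∑ z : Fin (t + 2) → Fin K,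
              if z (Fin.last (t + 1)) = k then F (t + 1) z else 0 :=
            Fintype.sum_equiv (Fin.snocEquiv (fun _ => Fin K)) _ _ (fun p => rfl)
  rw [Finset.sum_congr rfl (fun k _ => key T le_rfl k), Finset.sum_comm]
  apply Finset.sum_congr rfl
  intro z _
  rw [Finset.sum_ite_eq Finset.univ (z (Fin.last T)) (fun _ => F T z)]
  simp [hF]
end

section
/- Suppose the total likelihood L = Σ_z W(z) is strictly positive, and define the posterior probability mass function p z = W(z) / L on paths. Then for every 0 ≤ t ≤ T and every k ∈ Fin K, the posterior state marginal satisfies Σ_{z : z t = k} p z = α t k · β t k / L. -/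
open Finset Real

/-- Resummation over one coordinate: if `A z k` does not depend on coordinate `i`
of `z`, then summing `A z (z i)` over all `z` equals `1/K` times the sum of
`A z k` over all `z` and `k`. -/
lemma hmm_resum {n K : ℕ} (i : Fin n) (A : (Fin n → Fin K) → Fin K → ℝ)
    (hA : ∀ z j k, A (Function.update z i j) k = A z k) :
    (K : ℝ) * ∑ z : Fin n → Fin K, A z (z i)
      = ∑ z : Fin n → Fin K, ∑ k : Fin K, A z k := by
  classical
  set e := Equiv.funSplitAt i (Fin K) with he
  have hsymm : ∀ (a b : Fin K) (r : { j // j ≠ i } → Fin K),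
      e.symm (a, r) = Function.update (e.symm (b, r)) i a := by
    intro a b r
    funext j
    by_cases h : j = i
    · subst h
      simp [he, Equiv.funSplitAt, Equiv.piSplitAt]
    · simp [he, Equiv.funSplitAt, Equiv.piSplitAt, Function.update_of_ne h, h]
  have hval : ∀ (a : Fin K) (r : { j // j ≠ i } → Fin K), e.symm (a, r) i = a := by
    intro a r; simp [he, Equiv.funSplitAt, Equiv.piSplitAt]
  have key : ∀ (a b : Fin K) (r : { j // j ≠ i } → Fin K) (k : Fin K),
      A (e.symm (a, r)) k = A (e.symm (b, r)) k := by
    intro a b r k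
    rw [hsymm a b r, hA]
  have h1 : ∑ z : Fin n → Fin K, A z (z i)
      = ∑ p : Fin K × ({ j // j ≠ i } → Fin K), A (e.symm p) (e.symm p i) :=
    (Equiv.sum_comp e.symm fun z => A z (z i)).symm
  have h2 : ∑ z : Fin n → Fin K, ∑ k : Fin K, A z k
      = ∑ p : Fin K × ({ j // j ≠ i } → Fin K), ∑ k : Fin K, A (e.symm p) k :=
    (Equiv.sum_comp e.symm fun z => ∑ k : Fin K, A z k).symm
  rw [h1, h2, Fintype.sum_prod_type, Fintype.sum_prod_type]
  simp only [hval]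
  have h3 : ∀ a : Fin K,
      (∑ r : { j // j ≠ i } → Fin K, ∑ k : Fin K, A (e.symm (a, r)) k)
        = ∑ r : { j // j ≠ i } → Fin K, ∑ k : Fin K, A (e.symm (k, r)) k := by
    intro a
    exact Finset.sum_congr rfl fun r _ => Finset.sum_congr rfl fun k _ => key a k r k
  calc (K : ℝ) * ∑ a : Fin K, ∑ r : { j // j ≠ i } → Fin K, A (e.symm (a, r)) a
      = (K : ℝ) * ∑ r : { j // j ≠ i } → Fin K, ∑ a : Fin K, A (e.symm (a, r)) a := by
        rw [Finset.sum_comm]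
    _ = ∑ a : Fin K, ∑ r : { j // j ≠ i } → Fin K, ∑ k : Fin K, A (e.symm (k, r)) k := by
        rw [Finset.sum_const, Finset.card_univ, Fintype.card_fin, nsmul_eq_mul]
    _ = ∑ a : Fin K, ∑ r : { j // j ≠ i } → Fin K, ∑ k : Fin K, A (e.symm (a, r)) k := by
        exact Finset.sum_congr rfl fun a _ => (h3 a).symm

/-- Prefix weight: the part of the path weight using transitions up to time `t`. -/
def hmmWpre (K T : ℕ) (pi0 : Fin K → ℝ) (G : ℕ → Fin K → Fin K → ℝ) (t : ℕ)
    (z : Fin (T + 1) → Fin K) : ℝ :=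
  pi0 (z 0) * ∏ s : Fin T,
    if (s : ℕ) < t then G ((s : ℕ) + 1) (z s.castSucc) (z s.succ) else 1

/-- Suffix weight: the part of the path weight using transitions after time `t`. -/
def hmmWsuf (K T : ℕ) (G : ℕ → Fin K → Fin K → ℝ) (t : ℕ)
    (z : Fin (T + 1) → Fin K) : ℝ :=
  ∏ s : Fin T,
    if t ≤ (s : ℕ) then G ((s : ℕ) + 1) (z s.castSucc) (z s.succ) else 1

lemma hmmW_split (K T : ℕ) (pi0 : Fin K → ℝ) (G : ℕ → Fin K → Fin K → ℝ) (t : ℕ)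
    (z : Fin (T + 1) → Fin K) :
    hmmWpre K T pi0 G t z * hmmWsuf K T G t z
      = pi0 (z 0) * ∏ s : Fin T, G ((s : ℕ) + 1) (z s.castSucc) (z s.succ) := by
  unfold hmmWpre hmmWsuf
  rw [mul_assoc, ← Finset.prod_mul_distrib]
  congr 1
  refine Finset.prod_congr rfl fun s _ => ?_
  by_cases h : (s : ℕ) < t
  · simp [h, not_le.2 h]
  · simp [h, not_lt.1 h]

lemma hmmWpre_succ (K T : ℕ) (pi0 : Fin K → ℝ) (G : ℕ → Fin K → Fin K → ℝ)
    (t : ℕ) (ht : t < T) (z : Fin (T + 1) → Fin K) :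
    hmmWpre K T pi0 G (t + 1) z
      = hmmWpre K T pi0 G t z
          * G (t + 1) (z ⟨t, by omega⟩) (z ⟨t + 1, by omega⟩) := by
  unfold hmmWpre
  rw [mul_assoc]
  congr 1
  have step : ∀ s : Fin T,
      (if (s : ℕ) < t + 1 then G ((s : ℕ) + 1) (z s.castSucc) (z s.succ) else 1)
        = (if (s : ℕ) < t then G ((s : ℕ) + 1) (z s.castSucc) (z s.succ) else 1)
          * (if s = ⟨t, ht⟩ then G ((s : ℕ) + 1) (z s.castSucc) (z s.succ) else 1) := by
    intro s
    by_cases hs : s = (⟨t, ht⟩ : Fin T)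
    · subst hs
      simp
    · have hv : (s : ℕ) ≠ t := fun h => hs (Fin.ext h)
      by_cases h1 : (s : ℕ) < t
      · simp [h1, hs, Nat.lt_succ_of_lt h1]
      · have h2 : ¬ (s : ℕ) < t + 1 := by omega
        simp [h1, h2, hs]
  rw [Finset.prod_congr rfl fun s _ => step s, Finset.prod_mul_distrib,
    Finset.prod_ite_eq' Finset.univ (⟨t, ht⟩ : Fin T)
      (fun s => G ((s : ℕ) + 1) (z s.castSucc) (z s.succ))]
  simp

lemma hmmWsuf_eq (K T : ℕ) (G : ℕ → Fin K → Fin K → ℝ)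
    (t : ℕ) (ht : t < T) (z : Fin (T + 1) → Fin K) :
    hmmWsuf K T G t z
      = G (t + 1) (z ⟨t, by omega⟩) (z ⟨t + 1, by omega⟩)
          * hmmWsuf K T G (t + 1) z := by
  unfold hmmWsuf
  have step : ∀ s : Fin T,
      (if t ≤ (s : ℕ) then G ((s : ℕ) + 1) (z s.castSucc) (z s.succ) else 1)
        = (if s = ⟨t, ht⟩ then G ((s : ℕ) + 1) (z s.castSucc) (z s.succ) else 1)
          * (if t + 1 ≤ (s : ℕ) then G ((s : ℕ) + 1) (z s.castSucc) (z s.succ) else 1) := by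
    intro s
    by_cases hs : s = (⟨t, ht⟩ : Fin T)
    · subst hs
      simp
    · have hv : (s : ℕ) ≠ t := fun h => hs (Fin.ext h)
      by_cases h1 : t + 1 ≤ (s : ℕ)
      · have h2 : t ≤ (s : ℕ) := by omega
        simp [h1, h2, hs]
      · have h2 : ¬ t ≤ (s : ℕ) := by omega
        simp [h1, h2, hs]
  rw [Finset.prod_congr rfl fun s _ => step s, Finset.prod_mul_distrib,
    Finset.prod_ite_eq' Finset.univ (⟨t, ht⟩ : Fin T)
      (fun s => G ((s : ℕ) + 1) (z s.castSucc) (z s.succ))]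
  simp

lemma hmmWsuf_update (K T : ℕ) (G : ℕ → Fin K → Fin K → ℝ) (t : ℕ)
    (z : Fin (T + 1) → Fin K) (i : Fin (T + 1)) (a : Fin K) (hi : (i : ℕ) < t) :
    hmmWsuf K T G t (Function.update z i a) = hmmWsuf K T G t z := by
  unfold hmmWsuf
  refine Finset.prod_congr rfl fun s _ => ?_
  by_cases h : t ≤ (s : ℕ)
  · have h1 : s.castSucc ≠ i := by
      intro hh
      have : (s : ℕ) = (i : ℕ) := congrArg Fin.val hh
      omega
    have h2 : s.succ ≠ i := by
      intro hh
      have : (s : ℕ) + 1 = (i : ℕ) := congrArg Fin.val hh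
      omega
    simp [h, Function.update_of_ne h1, Function.update_of_ne h2]
  · simp [h]

/-- Forward lemma. -/
lemma hmm_fwd (K T : ℕ) (pi0 : Fin K → ℝ) (G : ℕ → Fin K → Fin K → ℝ)
    (α : ℕ → Fin K → ℝ) (hα0 : ∀ k, α 0 k = pi0 k)
    (hαrec : ∀ t, t < T → ∀ k : Fin K, α (t + 1) k = ∑ k' : Fin K, G (t + 1) k' k * α t k')
    (t : ℕ) :
    ∀ ht : t ≤ T, ∀ f : (Fin (T + 1) → Fin K) → ℝ,
      (∀ (z : Fin (T + 1) → Fin K) (i : Fin (T + 1)) (a : Fin K), (i : ℕ) < t →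
        f (Function.update z i a) = f z) →
      (K : ℝ) ^ t * ∑ z : Fin (T + 1) → Fin K, f z * hmmWpre K T pi0 G t z
        = ∑ z : Fin (T + 1) → Fin K, f z * α t (z ⟨t, Nat.lt_succ_of_le ht⟩) := by
  induction t with
  | zero =>
    intro ht f hf
    have hW0 : ∀ z : Fin (T + 1) → Fin K, hmmWpre K T pi0 G 0 z = pi0 (z 0) := by
      intro z; unfold hmmWpre; simp
    simp only [pow_zero, one_mul]
    refine Finset.sum_congr rfl fun z _ => ?_
    rw [hW0 z, hα0]
    rfl
  | succ t ih =>
    intro ht f hf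
    have htT : t < T := ht
    have hterm : ∀ z : Fin (T + 1) → Fin K,
        f z * hmmWpre K T pi0 G (t + 1) z
          = (f z * G (t + 1) (z ⟨t, by omega⟩) (z ⟨t + 1, by omega⟩))
              * hmmWpre K T pi0 G t z := by
      intro z
      rw [hmmWpre_succ K T pi0 G t htT z]
      ring
    have h1 : (K : ℝ) ^ (t + 1) * ∑ z : Fin (T + 1) → Fin K, f z * hmmWpre K T pi0 G (t + 1) z
        = (K : ℝ) * ((K : ℝ) ^ t * ∑ z : Fin (T + 1) → Fin K,
            (f z * G (t + 1) (z ⟨t, by omega⟩) (z ⟨t + 1, by omega⟩)) * hmmWpre K T pi0 G t z) := by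
      rw [Finset.sum_congr rfl fun z _ => hterm z, pow_succ]
      ring
    rw [h1]
    set g : (Fin (T + 1) → Fin K) → ℝ :=
      fun z => f z * G (t + 1) (z ⟨t, by omega⟩) (z ⟨t + 1, by omega⟩) with hg
    have hgupd : ∀ (z : Fin (T + 1) → Fin K) (i : Fin (T + 1)) (a : Fin K), (i : ℕ) < t →
        g (Function.update z i a) = g z := by
      intro z i a hi
      have h1' : (⟨t, by omega⟩ : Fin (T + 1)) ≠ i := by
        intro hh; have : t = (i : ℕ) := congrArg Fin.val hh; omega
      have h2' : (⟨t + 1, by omega⟩ : Fin (T + 1)) ≠ i := by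
        intro hh; have : t + 1 = (i : ℕ) := congrArg Fin.val hh; omega
      simp only [hg]
      rw [hf z i a (by omega), Function.update_of_ne h1', Function.update_of_ne h2']
    rw [ih (le_of_lt htT) g hgupd]
    have hresum := hmm_resum (⟨t, by omega⟩ : Fin (T + 1))
      (fun z k' => f z * G (t + 1) k' (z ⟨t + 1, by omega⟩) * α t k')
      (by
        intro z j k
        have h2' : (⟨t + 1, by omega⟩ : Fin (T + 1)) ≠ (⟨t, by omega⟩ : Fin (T + 1)) := by
          intro hh; have : t + 1 = t := congrArg Fin.val hh; omega
        rw [hf z _ j (Nat.lt_succ_self t), Function.update_of_ne h2'])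
    have hz : ∀ z : Fin (T + 1) → Fin K,
        g z * α t (z ⟨t, Nat.lt_succ_of_le (le_of_lt htT)⟩)
          = f z * G (t + 1) (z ⟨t, by omega⟩) (z ⟨t + 1, by omega⟩)
              * α t (z ⟨t, by omega⟩) := fun z => rfl
    rw [Finset.sum_congr rfl fun z _ => hz z, hresum]
    refine Finset.sum_congr rfl fun z _ => ?_
    rw [hαrec t htT (z ⟨t + 1, by omega⟩), Finset.mul_sum]
    refine Finset.sum_congr rfl fun k' _ => ?_
    ring

/-- Backward lemma. -/
lemma hmm_bwd (K T : ℕ) (G : ℕ → Fin K → Fin K → ℝ)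
    (β : ℕ → Fin K → ℝ) (hβT : ∀ k, β T k = 1)
    (hβrec : ∀ t, t < T → ∀ k : Fin K,
      β t k = ∑ k' : Fin K, G (t + 1) k k' * β (t + 1) k')
    (d : ℕ) :
    ∀ t, ∀ htd : t + d = T, ∀ f : (Fin (T + 1) → Fin K) → ℝ,
      (∀ (z : Fin (T + 1) → Fin K) (i : Fin (T + 1)) (a : Fin K), t < (i : ℕ) →
        f (Function.update z i a) = f z) →
      (K : ℝ) ^ d * ∑ z : Fin (T + 1) → Fin K, f z * hmmWsuf K T G t z
        = ∑ z : Fin (T + 1) → Fin K, f z * β t (z ⟨t, by omega⟩) := by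
  induction d with
  | zero =>
    intro t htd f hf
    have hW0 : ∀ z : Fin (T + 1) → Fin K, hmmWsuf K T G t z = 1 := by
      intro z
      unfold hmmWsuf
      refine Finset.prod_eq_one fun s _ => ?_
      have : ¬ t ≤ (s : ℕ) := by omega
      simp [this]
    have hβt : ∀ j : Fin K, β t j = 1 := by
      intro j
      rw [show t = T by omega]
      exact hβT j
    simp only [pow_zero, one_mul]
    refine Finset.sum_congr rfl fun z _ => ?_
    rw [hW0 z, hβt]
  | succ d ih =>
    intro t htd f hf
    have htT : t < T := by omega
    have hterm : ∀ z : Fin (T + 1) → Fin K,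
        f z * hmmWsuf K T G t z
          = (f z * G (t + 1) (z ⟨t, by omega⟩) (z ⟨t + 1, by omega⟩))
              * hmmWsuf K T G (t + 1) z := by
      intro z
      rw [hmmWsuf_eq K T G t htT z]
      ring
    have h1 : (K : ℝ) ^ (d + 1) * ∑ z : Fin (T + 1) → Fin K, f z * hmmWsuf K T G t z
        = (K : ℝ) * ((K : ℝ) ^ d * ∑ z : Fin (T + 1) → Fin K,
            (f z * G (t + 1) (z ⟨t, by omega⟩) (z ⟨t + 1, by omega⟩))
              * hmmWsuf K T G (t + 1) z) := by
      rw [Finset.sum_congr rfl fun z _ => hterm z, pow_succ]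
      ring
    rw [h1]
    set g : (Fin (T + 1) → Fin K) → ℝ :=
      fun z => f z * G (t + 1) (z ⟨t, by omega⟩) (z ⟨t + 1, by omega⟩) with hg
    have hgupd : ∀ (z : Fin (T + 1) → Fin K) (i : Fin (T + 1)) (a : Fin K), t + 1 < (i : ℕ) →
        g (Function.update z i a) = g z := by
      intro z i a hi
      have h1' : (⟨t, by omega⟩ : Fin (T + 1)) ≠ i := by
        intro hh; have : t = (i : ℕ) := congrArg Fin.val hh; omega
      have h2' : (⟨t + 1, by omega⟩ : Fin (T + 1)) ≠ i := by
        intro hh; have : t + 1 = (i : ℕ) := congrArg Fin.val hh; omega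
      simp only [hg]
      rw [hf z i a (by omega), Function.update_of_ne h1', Function.update_of_ne h2']
    rw [ih (t + 1) (by omega) g hgupd]
    have hresum := hmm_resum (⟨t + 1, by omega⟩ : Fin (T + 1))
      (fun z k' => f z * G (t + 1) (z ⟨t, by omega⟩) k' * β (t + 1) k')
      (by
        intro z j k
        have h1' : (⟨t, by omega⟩ : Fin (T + 1)) ≠ (⟨t + 1, by omega⟩ : Fin (T + 1)) := by
          intro hh; have : t = t + 1 := congrArg Fin.val hh; omega
        rw [hf z _ j (Nat.lt_succ_self t), Function.update_of_ne h1'])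
    have hz : ∀ z : Fin (T + 1) → Fin K,
        g z * β (t + 1) (z ⟨t + 1, by omega⟩)
          = f z * G (t + 1) (z ⟨t, by omega⟩) (z ⟨t + 1, by omega⟩)
              * β (t + 1) (z ⟨t + 1, by omega⟩) := fun z => rfl
    rw [Finset.sum_congr rfl fun z _ => hz z, hresum]
    refine Finset.sum_congr rfl fun z _ => ?_
    rw [hβrec t htT (z ⟨t, by omega⟩), Finset.mul_sum]
    refine Finset.sum_congr rfl fun k' _ => ?_
    ring

/-- when the total likelihood `L` is positive, the posterior state
marginal of the posterior pmf `p z = W(z)/L` satisfies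
`Σ_{z : z t = k} p z = α t k · β t k / L`. -/
theorem stmt_6 (K T : ℕ) (hK : 1 ≤ K) (hT : 1 ≤ T)
    (pi0 : Fin K → ℝ) (φ : ℕ → Fin K → Fin K → ℝ) (e : ℕ → Fin K → ℝ)
    (hπ : ∀ k, 0 ≤ pi0 k)
    (hφ : ∀ t k' k, 0 ≤ φ t k' k)
    (he : ∀ t k, 0 ≤ e t k)
    (α : ℕ → Fin K → ℝ)
    (hα0 : ∀ k, α 0 k = pi0 k)
    (hαrec : ∀ t, 1 ≤ t → t ≤ T → ∀ k : Fin K,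
      α t k = e t k * ∑ k' : Fin K, φ t k' k * α (t - 1) k')
    (β : ℕ → Fin K → ℝ)
    (hβT : ∀ k, β T k = 1)
    (hβrec : ∀ t, t < T → ∀ k : Fin K,
      β t k = ∑ k' : Fin K, φ (t + 1) k k' * e (t + 1) k' * β (t + 1) k')
    (W : (Fin (T + 1) → Fin K) → ℝ)
    (hW : ∀ z, W z = pi0 (z 0) *
      ∏ s : Fin T, φ (↑s + 1) (z s.castSucc) (z s.succ) * e (↑s + 1) (z s.succ))
    (L : ℝ) (hL : L = ∑ z : Fin (T + 1) → Fin K, W z) (hLpos : 0 < L)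
    (p : (Fin (T + 1) → Fin K) → ℝ) (hp : ∀ z, p z = W z / L) :
    ∀ t, ∀ ht : t ≤ T, ∀ k : Fin K,
      ∑ z ∈ Finset.univ.filter
          (fun z : Fin (T + 1) → Fin K => z ⟨t, Nat.lt_succ_of_le ht⟩ = k), p z
        = α t k * β t k / L := by
  intro t ht k
  classical
  set G : ℕ → Fin K → Fin K → ℝ := fun u k' k => φ u k' k * e u k with hG
  have hαrec' : ∀ u, u < T → ∀ k : Fin K,
      α (u + 1) k = ∑ k' : Fin K, G (u + 1) k' k * α u k' := by
    intro u hu k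
    rw [hαrec (u + 1) (by omega) (by omega) k, Finset.mul_sum]
    simp only [Nat.add_sub_cancel, hG]
    refine Finset.sum_congr rfl fun k' _ => by ring
  have hβrec' : ∀ u, u < T → ∀ k : Fin K,
      β u k = ∑ k' : Fin K, G (u + 1) k k' * β (u + 1) k' := by
    intro u hu k
    rw [hβrec u hu k]
  have hWG : ∀ z, W z = hmmWpre K T pi0 G t z * hmmWsuf K T G t z := by
    intro z
    rw [hmmW_split, hW z]
  set ti : Fin (T + 1) := ⟨t, Nat.lt_succ_of_le ht⟩ with hti
  set S : ℝ := ∑ z : Fin (T + 1) → Fin K, (if z ti = k then W z else 0) with hS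
  have hKne : ((K : ℝ)) ≠ 0 := by
    have : (0 : ℝ) < (K : ℝ) := by exact_mod_cast Nat.lt_of_lt_of_le Nat.zero_lt_one hK
    exact ne_of_gt this
  have hKTne : ((K : ℝ)) ^ T ≠ 0 := pow_ne_zero _ hKne
  -- count lemma
  have hcount : ∑ z : Fin (T + 1) → Fin K, (if z ti = k then (1 : ℝ) else 0)
      = (K : ℝ) ^ T := by
    have hres := hmm_resum ti (fun _ j => if j = k then (1 : ℝ) else 0)
      (fun z j k' => rfl)
    have hr : ∑ z : Fin (T + 1) → Fin K, ∑ j : Fin K, (if j = k then (1 : ℝ) else 0)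
        = (K : ℝ) ^ (T + 1) := by
      have hinner : ∀ z : Fin (T + 1) → Fin K,
          (∑ j : Fin K, (if j = k then (1 : ℝ) else 0)) = 1 := by
        intro z; simp
      rw [Finset.sum_congr rfl fun z _ => hinner z, Finset.sum_const]
      simp [Finset.card_univ]
    rw [hr] at hres
    have : (K : ℝ) * ∑ z : Fin (T + 1) → Fin K, (if z ti = k then (1 : ℝ) else 0)
        = (K : ℝ) * (K : ℝ) ^ T := by
      rw [hres, pow_succ]; ring
    exact mul_left_cancel₀ hKne this
  -- main computation
  have hmain : (K : ℝ) ^ T * S = (K : ℝ) ^ T * (α t k * β t k) := by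
    set f : (Fin (T + 1) → Fin K) → ℝ :=
      fun z => (if z ti = k then (1 : ℝ) else 0) * hmmWsuf K T G t z with hf
    have hSf : S = ∑ z : Fin (T + 1) → Fin K, f z * hmmWpre K T pi0 G t z := by
      rw [hS]
      refine Finset.sum_congr rfl fun z _ => ?_
      rw [hWG z, hf]
      by_cases hzk : z ti = k
      · simp only [hzk, if_pos]
        ring
      · simp [hzk]
    have hfupd : ∀ (z : Fin (T + 1) → Fin K) (i : Fin (T + 1)) (a : Fin K), (i : ℕ) < t →
        f (Function.update z i a) = f z := by
      intro z i a hi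
      have hne : ti ≠ i := by
        intro hh; have : t = (i : ℕ) := congrArg Fin.val hh; omega
      simp only [hf]
      rw [Function.update_of_ne hne, hmmWsuf_update K T G t z i a hi]
    have hfwd := hmm_fwd K T pi0 G α hα0 hαrec' t ht f hfupd
    have hstep1 : (K : ℝ) ^ t * S = ∑ z : Fin (T + 1) → Fin K,
        ((if z ti = k then (1 : ℝ) else 0) * α t (z ti)) * hmmWsuf K T G t z := by
      rw [hSf, hfwd]
      refine Finset.sum_congr rfl fun z _ => ?_
      simp only [hf]; ring
    set f2 : (Fin (T + 1) → Fin K) → ℝ :=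
      fun z => (if z ti = k then (1 : ℝ) else 0) * α t (z ti) with hf2
    have hf2upd : ∀ (z : Fin (T + 1) → Fin K) (i : Fin (T + 1)) (a : Fin K), t < (i : ℕ) →
        f2 (Function.update z i a) = f2 z := by
      intro z i a hi
      have hne : ti ≠ i := by
        intro hh; have : t = (i : ℕ) := congrArg Fin.val hh; omega
      simp only [hf2]
      rw [Function.update_of_ne hne]
    have hbwd := hmm_bwd K T G β hβT hβrec' (T - t) t (by omega) f2 hf2upd
    have hcoord : (⟨t, by omega⟩ : Fin (T + 1)) = ti := rfl
    have hstep2 : (K : ℝ) ^ (T - t) * ((K : ℝ) ^ t * S)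
        = ∑ z : Fin (T + 1) → Fin K, f2 z * β t (z ti) := by
      rw [hstep1, ← hbwd]
    have hstep3 : ∑ z : Fin (T + 1) → Fin K, f2 z * β t (z ti)
        = (α t k * β t k) * ∑ z : Fin (T + 1) → Fin K, (if z ti = k then (1 : ℝ) else 0) := by
      rw [Finset.mul_sum]
      refine Finset.sum_congr rfl fun z _ => ?_
      simp only [hf2]
      by_cases hzk : z ti = k
      · rw [hzk]; simp
      · simp [hzk]
    have hpow : (K : ℝ) ^ (T - t) * (K : ℝ) ^ t = (K : ℝ) ^ T := by
      rw [← pow_add]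
      congr 1
      omega
    calc (K : ℝ) ^ T * S = (K : ℝ) ^ (T - t) * ((K : ℝ) ^ t * S) := by
          rw [← mul_assoc, hpow]
      _ = (α t k * β t k) * ((K : ℝ) ^ T) := by rw [hstep2, hstep3, hcount]
      _ = (K : ℝ) ^ T * (α t k * β t k) := by ring
  have hSval : S = α t k * β t k := mul_left_cancel₀ hKTne hmain
  have hfilter : ∑ z ∈ Finset.univ.filter
      (fun z : Fin (T + 1) → Fin K => z ti = k), p z = S / L := by
    rw [Finset.sum_filter, hS, Finset.sum_div]
    refine Finset.sum_congr rfl fun z _ => ?_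
    rw [hp z]
    by_cases hzk : z ti = k
    · simp [hzk]
    · simp [hzk]
  rw [hfilter, hSval]
end
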